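/- Let C ≥ 2 and let V be a random vector on a probability space that is almost surely a probability vector on Fin C with a unique maximal entry at a (random) index M, with integrable coordinates. Fix a correct class c : Fin C and thresholds 0 ≤ β₁ < β₂ ≤ 1, and let V̂ denote the error-corrected vector of V. Then E[V̂ c] − E[V c] = E[(1 − V c)·[M = c]·[V c ≥ β₂]] − E[(V c − 1/C)·[M = c]·[V c < β₁]] − E[(V c)·[M ≠ c]·[V M ≥ β₂]] + E[(1/C − V c)·[M ≠ c]·[V M < β₁]], where [P] denotes the indicator of the event P. -/
import Mathlib


open Finset MeasureTheory ProbabilityTheory Filter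

/-- A probability vector on `Fin C`: nonnegative entries summing to 1. -/
def IsProbVec {C : ℕ} (v : Fin C → ℝ) : Prop :=
  (∀ i, 0 ≤ v i) ∧ ∑ i, v i = 1

/-- The error-corrected vector: one-hot at `m` if `v m ≥ β₂`, uniform if `v m < β₁`,
and `v` otherwise. -/
noncomputable def errCorrect {C : ℕ} (β₁ β₂ : ℝ) (v : Fin C → ℝ) (m : Fin C) :
    Fin C → ℝ :=
  if β₂ ≤ v m then (fun i => if i = m then 1 else 0)
  else if v m < β₁ then (fun _ => 1 / C)
  else v

lemma errCorrect_pointwise {C : ℕ} {β₁ β₂ : ℝ} (h : β₁ < β₂) (v : Fin C → ℝ) (m c : Fin C) :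
    errCorrect β₁ β₂ v m c = v c
      + (1 - v c) * (if m = c then 1 else 0) * (if β₂ ≤ v c then 1 else 0)
      - (v c - 1 / C) * (if m = c then 1 else 0) * (if v c < β₁ then 1 else 0)
      - (v c) * (if m ≠ c then 1 else 0) * (if β₂ ≤ v m then 1 else 0)
      + (1 / C - v c) * (if m ≠ c then 1 else 0) * (if v m < β₁ then 1 else 0) := by
  unfold errCorrect
  rcases eq_or_ne m c with rfl | hm
  · split_ifs <;> simp_all <;> linarith
  · have hcm : c ≠ m := Ne.symm hm
    split_ifs <;> simp_all <;> linarith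

lemma bdd_mul_integrable {Ω : Type*} [MeasurableSpace Ω] {μ : Measure Ω} {f g : Ω → ℝ}
    (hf : Integrable f μ) (hg : Measurable g) (hbd : ∀ ω, |g ω| ≤ 1) :
    Integrable (fun ω => f ω * g ω) μ := by
  refine Integrable.mono' hf.abs (hf.aestronglyMeasurable.mul hg.aestronglyMeasurable) ?_
  filter_upwards with ω
  have := hbd ω
  rw [norm_mul]
  calc ‖f ω‖ * ‖g ω‖ ≤ ‖f ω‖ * 1 := by
        apply mul_le_mul_of_nonneg_left _ (norm_nonneg _)
        simpa [Real.norm_eq_abs] using this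
    _ = |f ω| := by simp [Real.norm_eq_abs]

theorem expected_mass_change {C : ℕ} (hC : 2 ≤ C)
    {Ω : Type*} [MeasurableSpace Ω] (μ : Measure Ω) [IsProbabilityMeasure μ]
    (V : Ω → Fin C → ℝ) (hVmeas : Measurable V)
    (M : Ω → Fin C) (hMmeas : Measurable M)
    (hprob : ∀ᵐ ω ∂μ, IsProbVec (V ω) ∧ ∀ i, i ≠ M ω → V ω i < V ω (M ω))
    (hint : ∀ i, Integrable (fun ω => V ω i) μ)
    (c : Fin C)
    (β₁ β₂ : ℝ) (hβ₁ : 0 ≤ β₁) (hβ₁₂ : β₁ < β₂) (hβ₂ : β₂ ≤ 1) :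
    (∫ ω, errCorrect β₁ β₂ (V ω) (M ω) c ∂μ) - (∫ ω, V ω c ∂μ) =
      (∫ ω, (1 - V ω c) * (if M ω = c then 1 else 0)
          * (if β₂ ≤ V ω c then 1 else 0) ∂μ)
      - (∫ ω, (V ω c - 1 / C) * (if M ω = c then 1 else 0)
          * (if V ω c < β₁ then 1 else 0) ∂μ)
      - (∫ ω, (V ω c) * (if M ω ≠ c then 1 else 0)
          * (if β₂ ≤ V ω (M ω) then 1 else 0) ∂μ)
      + (∫ ω, (1 / C - V ω c) * (if M ω ≠ c then 1 else 0)
          * (if V ω (M ω) < β₁ then 1 else 0) ∂μ) := by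
  have hVc : Measurable fun ω => V ω c := (measurable_pi_apply c).comp hVmeas
  have hVM : Measurable fun ω => V ω (M ω) := by
    have : (fun ω => V ω (M ω)) = fun ω => ∑ i, if M ω = i then V ω i else 0 := by
      funext ω; simp
    rw [this]
    exact Finset.measurable_sum _ fun i _ =>
      Measurable.ite (hMmeas (measurableSet_singleton i))
        ((measurable_pi_apply i).comp hVmeas) measurable_const
  -- indicator measurability
  have hI1 : Measurable fun ω => (if M ω = c then (1:ℝ) else 0) :=
    Measurable.ite (hMmeas (measurableSet_singleton c)) measurable_const measurable_const
  have hI1' : Measurable fun ω => (if M ω ≠ c then (1:ℝ) else 0) :=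
    Measurable.ite ((hMmeas (measurableSet_singleton c)).compl) measurable_const measurable_const
  have hI2 : Measurable fun ω => (if β₂ ≤ V ω c then (1:ℝ) else 0) :=
    Measurable.ite (hVc measurableSet_Ici) measurable_const measurable_const
  have hI3 : Measurable fun ω => (if V ω c < β₁ then (1:ℝ) else 0) :=
    Measurable.ite (hVc measurableSet_Iio) measurable_const measurable_const
  have hI4 : Measurable fun ω => (if β₂ ≤ V ω (M ω) then (1:ℝ) else 0) :=
    Measurable.ite (hVM measurableSet_Ici) measurable_const measurable_const
  have hI5 : Measurable fun ω => (if V ω (M ω) < β₁ then (1:ℝ) else 0) :=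
    Measurable.ite (hVM measurableSet_Iio) measurable_const measurable_const
  have bd : ∀ (p : Prop) [Decidable p], |(if p then (1:ℝ) else 0)| ≤ 1 := by
    intro p _; split <;> norm_num
  -- integrabilities
  have hg1 : Integrable (fun ω => (1 - V ω c) * (if M ω = c then 1 else 0)
      * (if β₂ ≤ V ω c then 1 else 0)) μ := by
    have h0 : Integrable (fun ω => 1 - V ω c) μ := (integrable_const 1).sub (hint c)
    exact bdd_mul_integrable (bdd_mul_integrable h0 hI1 fun ω => bd _) hI2 fun ω => bd _
  have hg2 : Integrable (fun ω => (V ω c - 1 / C) * (if M ω = c then 1 else 0)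
      * (if V ω c < β₁ then 1 else 0)) μ := by
    have h0 : Integrable (fun ω => V ω c - 1 / C) μ := (hint c).sub (integrable_const _)
    exact bdd_mul_integrable (bdd_mul_integrable h0 hI1 fun ω => bd _) hI3 fun ω => bd _
  have hg3 : Integrable (fun ω => (V ω c) * (if M ω ≠ c then 1 else 0)
      * (if β₂ ≤ V ω (M ω) then 1 else 0)) μ := by
    exact bdd_mul_integrable (bdd_mul_integrable (hint c) hI1' fun ω => bd _) hI4 fun ω => bd _
  have hg4 : Integrable (fun ω => (1 / C - V ω c) * (if M ω ≠ c then 1 else 0)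
      * (if V ω (M ω) < β₁ then 1 else 0)) μ := by
    have h0 : Integrable (fun ω => 1 / (C:ℝ) - V ω c) μ := (integrable_const _).sub (hint c)
    exact bdd_mul_integrable (bdd_mul_integrable h0 hI1' fun ω => bd _) hI5 fun ω => bd _
  have key : (fun ω => errCorrect β₁ β₂ (V ω) (M ω) c) =
      fun ω => V ω c
        + (1 - V ω c) * (if M ω = c then 1 else 0) * (if β₂ ≤ V ω c then 1 else 0)
        - (V ω c - 1 / C) * (if M ω = c then 1 else 0) * (if V ω c < β₁ then 1 else 0)
        - (V ω c) * (if M ω ≠ c then 1 else 0) * (if β₂ ≤ V ω (M ω) then 1 else 0)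
        + (1 / C - V ω c) * (if M ω ≠ c then 1 else 0) * (if V ω (M ω) < β₁ then 1 else 0) := by
    funext ω; exact errCorrect_pointwise hβ₁₂ (V ω) (M ω) c
  rw [key]
  have hA : Integrable (fun ω => V ω c
      + (1 - V ω c) * (if M ω = c then 1 else 0) * (if β₂ ≤ V ω c then 1 else 0)) μ :=
    (hint c).add hg1
  have hB : Integrable (fun ω => V ω c
      + (1 - V ω c) * (if M ω = c then 1 else 0) * (if β₂ ≤ V ω c then 1 else 0)
      - (V ω c - 1 / C) * (if M ω = c then 1 else 0) * (if V ω c < β₁ then 1 else 0)) μ :=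
    hA.sub hg2
  have hD : Integrable (fun ω => V ω c
      + (1 - V ω c) * (if M ω = c then 1 else 0) * (if β₂ ≤ V ω c then 1 else 0)
      - (V ω c - 1 / C) * (if M ω = c then 1 else 0) * (if V ω c < β₁ then 1 else 0)
      - (V ω c) * (if M ω ≠ c then 1 else 0) * (if β₂ ≤ V ω (M ω) then 1 else 0)) μ :=
    hB.sub hg3
  rw [integral_add hD hg4, integral_sub hB hg3, integral_sub hA hg2,
    integral_add (hint c) hg1]
  ring
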